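/- Let T be a spanning tree of Kₙ and let p, p' be two leaves of T. Then the distance between p and p' in T is greater than 2 if and only if there exists a spanning tree T' with |E(T) △ E(T')| = 2 in which both p and p' have degree exactly 2. -/

import Mathlib

open SimpleGraph

private lemma reach_or {V : Type*} {T : SimpleGraph V} {a b : V} :
    ∀ {x y : V}, T.Walk x y → (y = a ∨ y = b) →
      (T.deleteEdges {s(a,b)}).Reachable x a ∨ (T.deleteEdges {s(a,b)}).Reachable x b := by
  intro x y w
  induction w with
  | nil =>
    rintro (rfl | rfl)
    · exact Or.inl (Reachable.refl _)
    · exact Or.inr (Reachable.refl _)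
  | @cons x z y h q ih =>
    intro hy
    by_cases he : s(x, z) = s(a, b)
    · rw [Sym2.eq_iff] at he
      rcases he with ⟨rfl, rfl⟩ | ⟨rfl, rfl⟩
      · exact Or.inl (Reachable.refl _)
      · exact Or.inr (Reachable.refl _)
    · have hadj : (T.deleteEdges {s(a,b)}).Adj x z := by
        simp only [deleteEdges_adj, Set.mem_singleton_iff]
        exact ⟨h, he⟩
      rcases ih hy with hr | hr
      · exact Or.inl (hadj.reachable.trans hr)
      · exact Or.inr (hadj.reachable.trans hr)

private lemma swap_isTree {V : Type*} {T : SimpleGraph V} (hT : T.IsTree)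
    {a b u v : V} (huv : u ≠ v)
    (hnr : ¬ (T.deleteEdges {s(a,b)}).Reachable u v) :
    (T.deleteEdges {s(a,b)} ⊔ fromEdgeSet {s(u,v)}).IsTree := by
  set T'' := T.deleteEdges {s(a,b)} with hT''
  set T' := T'' ⊔ fromEdgeSet {s(u,v)} with hT'def
  have hle : T'' ≤ T' := le_sup_left
  have hAdjuv : T'.Adj u v := by
    apply le_sup_right.trans (le_refl T')
    · simp [fromEdgeSet_adj, huv]
  have hall : ∀ x : V, T''.Reachable x a ∨ T''.Reachable x b := by
    intro x
    obtain ⟨w⟩ := hT.isConnected.preconnected x a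
    exact reach_or w (Or.inl rfl)
  have hkey : (T''.Reachable u a ∧ T''.Reachable v b) ∨
      (T''.Reachable u b ∧ T''.Reachable v a) := by
    rcases hall u with hu | hu <;> rcases hall v with hv | hv
    · exact absurd (hu.trans hv.symm) hnr
    · exact Or.inl ⟨hu, hv⟩
    · exact Or.inr ⟨hu, hv⟩
    · exact absurd (hu.trans hv.symm) hnr
  have hreachu : ∀ x : V, T'.Reachable x u := by
    intro x
    rcases hkey with ⟨hua, hvb⟩ | ⟨hub, hva⟩
    · rcases hall x with hx | hx
      · exact ((hx.mono hle).trans (hua.mono hle).symm)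
      · exact ((hx.mono hle).trans (hvb.mono hle).symm).trans hAdjuv.symm.reachable
    · rcases hall x with hx | hx
      · exact ((hx.mono hle).trans (hva.mono hle).symm).trans hAdjuv.symm.reachable
      · exact ((hx.mono hle).trans (hub.mono hle).symm)
  have hconn : T'.Connected := by
    rw [connected_iff]
    exact ⟨fun x y => (hreachu x).trans (hreachu y).symm, ⟨a⟩⟩
  have hbridge : T'.IsBridge s(u, v) := by
    rw [isBridge_iff]
    refine fun hr => hnr (hr.mono ?_)
    intro x y hxy
    simp only [deleteEdges_adj, Set.mem_singleton_iff, sdiff_adj, hT'def, sup_adj, fromEdgeSet_adj] at hxy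
    tauto
  have hacyclic : T'.IsAcyclic := by
    intro x c hc
    by_cases he : s(u, v) ∈ c.edges
    · exact ((isBridge_iff_adj_and_forall_cycle_notMem hAdjuv).mp hbridge) c hc he
    · have hsub : ∀ e ∈ c.edges, e ∈ T.edgeSet := by
        intro e hec
        have := c.edges_subset_edgeSet hec
        simp only [hT'def, edgeSet_sup, hT'', edgeSet_deleteEdges, edgeSet_fromEdgeSet,
          Set.mem_union, Set.mem_diff, Set.mem_singleton_iff] at this
        rcases this with ⟨h1, _⟩ | ⟨h1, _⟩
        · exact h1
        · exact absurd (h1 ▸ hec) he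
      exact hT.IsAcyclic (c.transfer T hsub) (hc.transfer hsub)
  exact ⟨hconn, hacyclic⟩

theorem stmt_12 (n : ℕ) (hn : 4 ≤ n) (T : SimpleGraph (Fin n)) (hT : T.IsTree)
    (p p' : Fin n) (hne : p ≠ p')
    (hp : (T.neighborSet p).ncard = 1) (hp' : (T.neighborSet p').ncard = 1) :
    2 < T.dist p p' ↔ ∃ T' : SimpleGraph (Fin n), T'.IsTree ∧
      (symmDiff T.edgeSet T'.edgeSet).ncard = 2 ∧
      (T'.neighborSet p).ncard = 2 ∧ (T'.neighborSet p').ncard = 2 := by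
  classical
  obtain ⟨a, ha⟩ := Set.ncard_eq_one.mp hp
  obtain ⟨c, hc⟩ := Set.ncard_eq_one.mp hp'
  have hadj_p : ∀ y, T.Adj p y ↔ y = a := by
    intro y; rw [← mem_neighborSet, ha, Set.mem_singleton_iff]
  have hadj_p' : ∀ y, T.Adj p' y ↔ y = c := by
    intro y; rw [← mem_neighborSet, hc, Set.mem_singleton_iff]
  constructor
  · -- forward
    intro hdist
    obtain ⟨W, hWp, hWl⟩ := hT.isConnected.exists_path_of_dist p p'
    cases W with
    | nil => simp only [Walk.length_nil] at hWl; omega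
    | @cons _ x _ h1 W1 =>
      cases W1 with
      | nil => simp only [Walk.length_cons, Walk.length_nil] at hWl; omega
      | @cons _ b _ h2 W2 =>
        have hd : T.dist p p' = W2.length + 2 := by
          simp only [Walk.length_cons] at hWl; omega
        have hx_ne_p' : x ≠ p' := by
          rintro rfl
          have := dist_le (Walk.cons h1 Walk.nil)
          simp only [Walk.length_cons, Walk.length_nil] at this; omega
        have hb_ne_p : b ≠ p := by
          rintro rfl
          have := dist_le W2
          omega
        have hb_ne_p' : b ≠ p' := by
          rintro rfl
          have := dist_le (Walk.cons h1 (Walk.cons h2 Walk.nil))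
          simp only [Walk.length_cons, Walk.length_nil] at this; omega
        have hnadj : ¬ T.Adj p p' := by
          intro h
          have := dist_le (Walk.cons h Walk.nil)
          simp only [Walk.length_cons, Walk.length_nil] at this; omega
        have hnr : ¬ (T.deleteEdges {s(x,b)}).Reachable p p' := by
          rintro ⟨q⟩
          set q' : T.Walk p p' := q.map (Hom.ofLE (T.deleteEdges_le _)) with hq'
          have hq'e : s(x,b) ∉ q'.edges := by
            intro hmem
            rw [hq', Walk.edges_map] at hmem
            obtain ⟨e', he', heq⟩ := List.mem_map.mp hmem
            simp only [Hom.ofLE_apply, Sym2.map_id', id] at heq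
            subst heq
            have := q.edges_subset_edgeSet he'
            rw [edgeSet_deleteEdges] at this
            exact this.2 rfl
          have huniq : (⟨Walk.cons h1 (Walk.cons h2 W2), hWp⟩ : T.Path p p') = q'.toPath :=
            hT.IsAcyclic.path_unique _ _
          have hmem2 : s(x,b) ∈ (q'.toPath : T.Walk p p').edges := by
            rw [← huniq]
            simp [Walk.edges_cons]
          exact hq'e (q'.edges_bypass_subset hmem2)
        refine ⟨T.deleteEdges {s(x,b)} ⊔ fromEdgeSet {s(p,p')},
          swap_isTree hT hne hnr, ?_, ?_, ?_⟩
        · -- symmDiff count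
          have hB : (T.deleteEdges {s(x,b)} ⊔ fromEdgeSet {s(p,p')}).edgeSet
              = (T.edgeSet \ {s(x,b)}) ∪ {s(p,p')} := by
            rw [edgeSet_sup, edgeSet_deleteEdges, edgeSet_fromEdgeSet]
            congr 1
            ext z
            simp only [Set.mem_diff, Set.mem_singleton_iff, Set.mem_setOf_eq,
              and_iff_left_iff_imp]
            rintro rfl
            simp [Sym2.isDiag_iff_proj_eq, hne]
          have he_mem : s(x,b) ∈ T.edgeSet := h2
          have hf_nmem : s(p,p') ∉ T.edgeSet := hnadj
          have hef : s(x,b) ≠ s(p,p') := fun h => hf_nmem (h ▸ he_mem)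
          have hSD : symmDiff T.edgeSet
              ((T.deleteEdges {s(x,b)} ⊔ fromEdgeSet {s(p,p')}).edgeSet)
              = {s(x,b), s(p,p')} := by
            rw [hB]
            ext z
            simp only [Set.mem_symmDiff, Set.mem_union, Set.mem_diff,
              Set.mem_singleton_iff, Set.mem_insert_iff]
            constructor
            · rintro (⟨hzA, hz⟩ | ⟨hz, hzA⟩)
              · push_neg at hz
                exact Or.inl (hz.1 hzA)
              · rcases hz with ⟨hz1, _⟩ | rfl
                · exact absurd hz1 hzA
                · exact Or.inr rfl
            · rintro (rfl | rfl)
              · refine Or.inl ⟨he_mem, ?_⟩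
                push_neg
                exact ⟨fun _ => rfl, hef⟩
              · exact Or.inr ⟨Or.inr rfl, hf_nmem⟩
          rw [hSD]
          exact Set.ncard_pair hef
        · -- degree of p
          have hxa : x = a := (hadj_p x).mp h1
          subst hxa
          have : (T.deleteEdges {s(x,b)} ⊔ fromEdgeSet {s(p,p')}).neighborSet p
              = {x, p'} := by
            ext y
            simp only [mem_neighborSet, sup_adj, deleteEdges_adj, fromEdgeSet_adj,
              Set.mem_singleton_iff, Set.mem_insert_iff]
            constructor
            · rintro (⟨hadj, _⟩ | ⟨heq, _⟩)
              · exact Or.inl ((hadj_p y).mp hadj)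
              · rw [Sym2.eq_iff] at heq
                rcases heq with ⟨-, rfl⟩ | ⟨rfl, rfl⟩
                · exact Or.inr rfl
                · exact absurd rfl hne
            · rintro (rfl | rfl)
              · refine Or.inl ⟨h1, ?_⟩
                rw [Sym2.eq_iff]
                push_neg
                exact ⟨fun h => absurd h.symm h1.ne', fun h => absurd h.symm hb_ne_p⟩
              · exact Or.inr ⟨rfl, hne⟩
          rw [this]
          exact Set.ncard_pair hx_ne_p'
        · -- degree of p'
          have hc_ne_p : c ≠ p := by
            rintro rfl
            exact hnadj ((hadj_p' c).mpr rfl).symm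
          have : (T.deleteEdges {s(x,b)} ⊔ fromEdgeSet {s(p,p')}).neighborSet p'
              = {c, p} := by
            ext y
            simp only [mem_neighborSet, sup_adj, deleteEdges_adj, fromEdgeSet_adj,
              Set.mem_singleton_iff, Set.mem_insert_iff]
            constructor
            · rintro (⟨hadj, _⟩ | ⟨heq, _⟩)
              · exact Or.inl ((hadj_p' y).mp hadj)
              · rw [Sym2.eq_iff] at heq
                rcases heq with ⟨h3, -⟩ | ⟨-, rfl⟩
                · exact absurd h3 hne.symm
                · exact Or.inr rfl
            · rintro (rfl | rfl)
              · refine Or.inl ⟨(hadj_p' _).mpr rfl, ?_⟩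
                rw [Sym2.eq_iff]
                push_neg
                refine ⟨fun h => absurd h.symm hx_ne_p', fun h => absurd h.symm hb_ne_p'⟩
              · exact Or.inr ⟨(Sym2.eq_swap), hne.symm⟩
          rw [this]
          exact Set.ncard_pair hc_ne_p
  · -- backward
    rintro ⟨T', hT', hsym, hdp, hdp'⟩
    have hcard : T.edgeSet.ncard = T'.edgeSet.ncard := by
      have h1 := hT.card_edgeFinset
      have h2 := hT'.card_edgeFinset
      rw [← coe_edgeFinset, ← coe_edgeFinset, Set.ncard_coe_finset, Set.ncard_coe_finset]
      omega
    have hdisj : Disjoint (T.edgeSet \ T'.edgeSet) (T'.edgeSet \ T.edgeSet) :=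
      disjoint_sdiff_sdiff
    have hsum : (T.edgeSet \ T'.edgeSet).ncard + (T'.edgeSet \ T.edgeSet).ncard = 2 := by
      rw [← Set.ncard_union_eq hdisj]
      rw [show T.edgeSet \ T'.edgeSet ∪ T'.edgeSet \ T.edgeSet
        = symmDiff T.edgeSet T'.edgeSet from (Set.symmDiff_def _ _).symm]
      exact hsym
    have hne1 : (T.edgeSet \ T'.edgeSet).Nonempty := by
      rw [Set.nonempty_iff_ne_empty]
      intro h0
      rw [Set.diff_eq_empty] at h0
      have : T.edgeSet = T'.edgeSet := Set.eq_of_subset_of_ncard_le h0 hcard.ge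
      rw [this, symmDiff_self] at hsym
      simp [Set.bot_eq_empty] at hsym
    have hne2 : (T'.edgeSet \ T.edgeSet).Nonempty := by
      rw [Set.nonempty_iff_ne_empty]
      intro h0
      rw [Set.diff_eq_empty] at h0
      have : T'.edgeSet = T.edgeSet := Set.eq_of_subset_of_ncard_le h0 hcard.le
      rw [← this, symmDiff_self] at hsym
      simp [Set.bot_eq_empty] at hsym
    have hone1 : (T.edgeSet \ T'.edgeSet).ncard = 1 := by
      have h1 := (Set.ncard_pos (Set.toFinite _)).mpr hne1
      have h2 := (Set.ncard_pos (Set.toFinite _)).mpr hne2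
      omega
    have hone2 : (T'.edgeSet \ T.edgeSet).ncard = 1 := by
      have h1 := (Set.ncard_pos (Set.toFinite _)).mpr hne1
      have h2 := (Set.ncard_pos (Set.toFinite _)).mpr hne2
      omega
    obtain ⟨e, he⟩ := Set.ncard_eq_one.mp hone1
    obtain ⟨f, hf⟩ := Set.ncard_eq_one.mp hone2
    have heA : e ∈ T.edgeSet ∧ e ∉ T'.edgeSet := by
      have : e ∈ T.edgeSet \ T'.edgeSet := he ▸ Set.mem_singleton e
      exact this
    have hfB : f ∈ T'.edgeSet ∧ f ∉ T.edgeSet := by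
      have : f ∈ T'.edgeSet \ T.edgeSet := hf ▸ Set.mem_singleton f
      exact this
    have hmemB : ∀ z, z ∈ T'.edgeSet ↔ (z ∈ T.edgeSet ∧ z ≠ e) ∨ z = f := by
      intro z
      constructor
      · intro hz
        by_cases hzA : z ∈ T.edgeSet
        · refine Or.inl ⟨hzA, ?_⟩
          rintro rfl
          exact heA.2 hz
        · have : z ∈ T'.edgeSet \ T.edgeSet := ⟨hz, hzA⟩
          rw [hf] at this
          exact Or.inr this
      · rintro (⟨hzA, hze⟩ | rfl)
        · by_contra hzB
          have : z ∈ T.edgeSet \ T'.edgeSet := ⟨hzA, hzB⟩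
          rw [he] at this
          exact hze this
        · exact hfB.1
    -- p and p' are both in f
    have hpf : p ∈ f := by
      by_contra hpf
      have hsub : T'.neighborSet p ⊆ {a} := by
        intro y hy
        rw [mem_neighborSet, ← mem_edgeSet, hmemB] at hy
        rcases hy with ⟨hA, -⟩ | hfe
        · exact Set.mem_singleton_iff.mpr ((hadj_p y).mp ((T.mem_edgeSet).mp hA))
        · exact absurd (hfe ▸ Sym2.mem_mk_left p y) hpf
      have := Set.ncard_le_ncard hsub (Set.toFinite _)
      rw [hdp, Set.ncard_singleton] at this
      omega
    have hp'f : p' ∈ f := by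
      by_contra hp'f
      have hsub : T'.neighborSet p' ⊆ {c} := by
        intro y hy
        rw [mem_neighborSet, ← mem_edgeSet, hmemB] at hy
        rcases hy with ⟨hA, -⟩ | hfe
        · exact Set.mem_singleton_iff.mpr ((hadj_p' y).mp ((T.mem_edgeSet).mp hA))
        · exact absurd (hfe ▸ Sym2.mem_mk_left p' y) hp'f
      have := Set.ncard_le_ncard hsub (Set.toFinite _)
      rw [hdp', Set.ncard_singleton] at this
      omega
    have hfeq : f = s(p, p') := (Sym2.mem_and_mem_iff hne).mp ⟨hpf, hp'f⟩
    have hnadj : ¬ T.Adj p p' := by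
      intro h
      exact hfB.2 (hfeq ▸ (T.mem_edgeSet).mpr h)
    -- p not in e
    have hpe : p ∉ e := by
      by_contra hpe
      obtain ⟨z, rfl⟩ := Sym2.mem_iff_exists.mp hpe
      have hza : z = a := (hadj_p z).mp ((T.mem_edgeSet).mp heA.1)
      subst hza
      have hsub : T'.neighborSet p ⊆ {p'} := by
        intro y hy
        rw [mem_neighborSet, ← mem_edgeSet, hmemB] at hy
        rcases hy with ⟨hA, hz⟩ | hfe
        · have : y = z := (hadj_p y).mp ((T.mem_edgeSet).mp hA)
          subst this
          exact absurd rfl hz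
        · rw [hfeq, Sym2.eq_iff] at hfe
          rcases hfe with ⟨-, rfl⟩ | ⟨h3, -⟩
          · exact rfl
          · exact absurd h3 (fun h => hne h)
      have := Set.ncard_le_ncard hsub (Set.toFinite _)
      rw [hdp, Set.ncard_singleton] at this
      omega
    have hp'e : p' ∉ e := by
      by_contra hp'e
      obtain ⟨z, rfl⟩ := Sym2.mem_iff_exists.mp hp'e
      have hza : z = c := (hadj_p' z).mp ((T.mem_edgeSet).mp heA.1)
      subst hza
      have hsub : T'.neighborSet p' ⊆ {p} := by
        intro y hy
        rw [mem_neighborSet, ← mem_edgeSet, hmemB] at hy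
        rcases hy with ⟨hA, hz⟩ | hfe
        · have : y = z := (hadj_p' y).mp ((T.mem_edgeSet).mp hA)
          subst this
          exact absurd rfl hz
        · rw [hfeq, Sym2.eq_iff] at hfe
          rcases hfe with ⟨h3, -⟩ | ⟨-, rfl⟩
          · exact absurd h3 hne.symm
          · exact rfl
      have := Set.ncard_le_ncard hsub (Set.toFinite _)
      rw [hdp', Set.ncard_singleton] at this
      omega
    -- now show the distance is > 2
    have hdpos : 0 < T.dist p p' := hT.isConnected.pos_dist_of_ne hne
    by_contra hle
    push_neg at hle
    obtain ⟨W, hWl⟩ := hT.isConnected.exists_walk_length_eq_dist p p'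
    rcases (by omega : T.dist p p' = 1 ∨ T.dist p p' = 2) with h | h
    · -- dist = 1 : adjacency, contradiction
      rw [h] at hWl
      cases W with
      | nil => simp at hWl
      | @cons _ x _ h1 W1 =>
        have : W1.length = 0 := by simp only [Walk.length_cons] at hWl; omega
        have hx : x = p' := W1.eq_of_length_eq_zero this
        subst hx
        exact hnadj h1
    · -- dist = 2 : triangle in T'
      rw [h] at hWl
      cases W with
      | nil => simp at hWl
      | @cons _ x _ h1 W1 =>
        cases W1 with
        | nil => simp at hWl
        | @cons _ y _ h2 W2 =>
          have : W2.length = 0 := by simp only [Walk.length_cons] at hWl; omega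
          have hy : y = p' := W2.eq_of_length_eq_zero this
          subst hy
          have hpx : T'.Adj p x := by
            rw [← mem_edgeSet, hmemB]
            refine Or.inl ⟨(T.mem_edgeSet).mpr h1, ?_⟩
            rintro rfl
            exact hpe (Sym2.mem_mk_left p x)
          have hxp' : T'.Adj x y := by
            rw [← mem_edgeSet, hmemB]
            refine Or.inl ⟨(T.mem_edgeSet).mpr h2, ?_⟩
            rintro rfl
            exact hp'e (Sym2.mem_mk_right x y)
          have hpp' : T'.Adj p y := (T'.mem_edgeSet).mp (hfeq ▸ hfB.1)
          have hP2 : (Walk.cons hpx (Walk.cons hxp' Walk.nil)).IsPath := by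
            simp only [Walk.isPath_def, Walk.support_cons, Walk.support_nil]
            simp [h1.ne, h2.ne, hne]
          have huniq := hT'.IsAcyclic.path_unique (Path.singleton hpp')
            ⟨Walk.cons hpx (Walk.cons hxp' Walk.nil), hP2⟩
          have := congrArg (fun P : T'.Path p y => (P : T'.Walk p y).length) huniq
          simp [Path.singleton] at this
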